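/- Let h ∈ L¹_loc(ℝⁿ) be such that Mh(x) < ∞ a.e., and let 0 < μ < 1. Then (Mh)^μ ∈ A₁ with ‖(Mh)^μ‖_{A₁} ≤ C_{n}/(1 − μ) for a dimensional constant C_n. -/

import Mathlib

open MeasureTheory ENNReal NNReal Set Filter

noncomputable def wInt {n : ℕ} (v : (Fin n → ℝ) → ℝ) (E : Set (Fin n → ℝ)) : ℝ≥0∞ :=
  ∫⁻ x in E, ENNReal.ofReal (v x)

noncomputable def maxOp {n : ℕ} (h : (Fin n → ℝ) → ℝ) (x : Fin n → ℝ) : ℝ≥0∞ :=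
  ⨆ (c : Fin n → ℝ) (r : ℝ) (_ : 0 < r) (_ : x ∈ Metric.closedBall c r),
    (∫⁻ y in Metric.closedBall c r, ENNReal.ofReal |h y|) / volume (Metric.closedBall c r)

def IsA1 {n : ℕ} (u : (Fin n → ℝ) → ℝ) (C : ℝ) : Prop :=
  (∀ x, 0 ≤ u x) ∧ MeasureTheory.LocallyIntegrable u volume ∧
    ∀ (c : Fin n → ℝ) (r : ℝ), 0 < r →
      wInt u (Metric.closedBall c r) ≤
        ENNReal.ofReal C *
          essInf (fun y => ENNReal.ofReal (u y)) (volume.restrict (Metric.closedBall c r)) *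
          volume (Metric.closedBall c r)

noncomputable def distribF {n : ℕ} (v : (Fin n → ℝ) → ℝ) (g : (Fin n → ℝ) → ℝ≥0∞)
    (y : ℝ≥0∞) : ℝ≥0∞ :=
  wInt v {x | y < g x}

noncomputable def wkLorentz {n : ℕ} (p : ℝ) (v : (Fin n → ℝ) → ℝ)
    (g : (Fin n → ℝ) → ℝ≥0∞) : ℝ≥0∞ :=
  ⨆ y : ℝ≥0, (y : ℝ≥0∞) * (distribF v g y) ^ (1 / p)

noncomputable def lorentzOne {n : ℕ} (p : ℝ) (v : (Fin n → ℝ) → ℝ)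
    (g : (Fin n → ℝ) → ℝ≥0∞) : ℝ≥0∞ :=
  ENNReal.ofReal p * ∫⁻ y in Set.Ioi (0:ℝ), (distribF v g (ENNReal.ofReal y)) ^ (1 / p)

noncomputable def ofFun {n : ℕ} (f : (Fin n → ℝ) → ℝ) : (Fin n → ℝ) → ℝ≥0∞ :=
  fun x => ENNReal.ofReal |f x|

noncomputable def l1Norm {n : ℕ} (u f : (Fin n → ℝ) → ℝ) : ℝ≥0∞ :=
  ∫⁻ x, ENNReal.ofReal |f x| * ENNReal.ofReal (u x)

namespace CR

variable {n : ℕ}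


variable {n : ℕ}

lemma vol_cb (c : Fin n → ℝ) {r : ℝ} (hr : 0 ≤ r) :
    volume (Metric.closedBall c r) = ENNReal.ofReal ((2*r)^n) := by
  rw [Real.volume_pi_closedBall c hr, Fintype.card_fin]

lemma vol_cb_pos (c : Fin n → ℝ) {r : ℝ} (hr : 0 < r) :
    0 < volume (Metric.closedBall c r) := by
  rw [vol_cb c hr.le]
  exact ENNReal.ofReal_pos.2 (pow_pos (by linarith) n)

lemma vol_cb_ne_top (c : Fin n → ℝ) {r : ℝ} (hr : 0 ≤ r) :
    volume (Metric.closedBall c r) ≠ ⊤ := by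
  rw [vol_cb c hr]; exact ENNReal.ofReal_ne_top

lemma le_maxOp (h : (Fin n → ℝ) → ℝ) {c : Fin n → ℝ} {r : ℝ} (hr : 0 < r)
    {x : Fin n → ℝ} (hx : x ∈ Metric.closedBall c r) :
    (∫⁻ y in Metric.closedBall c r, ENNReal.ofReal |h y|) / volume (Metric.closedBall c r)
      ≤ maxOp h x := by
  refine le_iSup_of_le c (le_iSup_of_le r (le_iSup_of_le hr (le_iSup_of_le hx le_rfl)))

lemma maxOp_mono {g h : (Fin n → ℝ) → ℝ} (hg : ∀ y, |g y| ≤ |h y|) (x : Fin n → ℝ) :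
    maxOp g x ≤ maxOp h x := by
  refine iSup_le fun c => iSup_le fun r => iSup_le fun hr => iSup_le fun hx => ?_
  refine le_trans ?_ (le_maxOp h hr hx)
  exact ENNReal.div_le_div_right
    (lintegral_mono fun y => ENNReal.ofReal_le_ofReal (hg y)) _

lemma abs_indicator_le (h : (Fin n → ℝ) → ℝ) (S : Set (Fin n → ℝ)) (y : Fin n → ℝ) :
    |S.indicator h y| ≤ |h y| := by
  by_cases hy : y ∈ S
  · rw [Set.indicator_of_mem hy]
  · rw [Set.indicator_of_notMem hy]; simp [abs_nonneg]

lemma ofReal_abs_split (h : (Fin n → ℝ) → ℝ) (S : Set (Fin n → ℝ)) (y : Fin n → ℝ) :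
    ENNReal.ofReal |h y| =
      ENNReal.ofReal |S.indicator h y| + ENNReal.ofReal |Sᶜ.indicator h y| := by
  by_cases hy : y ∈ S
  · rw [Set.indicator_of_mem hy, Set.indicator_of_notMem (by simpa using hy)]
    simp
  · rw [Set.indicator_of_notMem hy, Set.indicator_of_mem (by simpa using hy)]
    simp

lemma maxOp_split (h : (Fin n → ℝ) → ℝ) {S : Set (Fin n → ℝ)} (hS : MeasurableSet S)
    (hh : AEMeasurable h volume) (x : Fin n → ℝ) :
    maxOp h x ≤ maxOp (S.indicator h) x + maxOp (Sᶜ.indicator h) x := by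
  refine iSup_le fun c => iSup_le fun r => iSup_le fun hr => iSup_le fun hx => ?_
  have key : (∫⁻ y in Metric.closedBall c r, ENNReal.ofReal |h y|) =
      (∫⁻ y in Metric.closedBall c r, ENNReal.ofReal |S.indicator h y|) +
      (∫⁻ y in Metric.closedBall c r, ENNReal.ofReal |Sᶜ.indicator h y|) := by
    rw [← lintegral_add_left']
    · exact lintegral_congr fun y => ofReal_abs_split h S y
    · exact (continuous_abs.measurable.comp_aemeasurable
        (hh.restrict.indicator hS)).ennreal_ofReal
  rw [key, ENNReal.add_div]
  exact add_le_add (le_maxOp _ hr hx) (le_maxOp _ hr hx)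

lemma lsc_maxOp (h : (Fin n → ℝ) → ℝ) : LowerSemicontinuous (maxOp h) := by
  intro x y hy
  simp only [maxOp, lt_iSup_iff] at hy
  obtain ⟨c, r, hr, hx, hterm⟩ := hy
  have hytop : y ≠ ⊤ := hterm.ne_top
  set I : ℝ → ℝ≥0∞ := fun ρ => ∫⁻ y in Metric.closedBall c ρ, ENNReal.ofReal |h y| with hI
  have hVne : volume (Metric.closedBall c r) ≠ 0 := (vol_cb_pos c hr).ne'
  have hVtop : volume (Metric.closedBall c r) ≠ ⊤ := vol_cb_ne_top c hr.le
  have hyV : y * volume (Metric.closedBall c r) < I r :=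
    (ENNReal.lt_div_iff_mul_lt (Or.inl hVne) (Or.inl hVtop)).1 hterm
  have hcont : ContinuousAt (fun ρ : ℝ => y * ENNReal.ofReal ((2*ρ)^n)) r := by
    refine (ENNReal.continuous_const_mul hytop).continuousAt.comp ?_
    exact (ENNReal.continuous_ofReal.comp ((continuous_const.mul continuous_id).pow n)).continuousAt
  have hev : ∀ᶠ ρ in nhds r, y * ENNReal.ofReal ((2*ρ)^n) < I r := by
    have : y * ENNReal.ofReal ((2*r)^n) < I r := by rwa [← vol_cb c hr.le]
    exact hcont.eventually_lt continuousAt_const this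
  obtain ⟨ρ, hρlt, hρr⟩ : ∃ ρ, y * ENNReal.ofReal ((2*ρ)^n) < I r ∧ r < ρ := by
    have h2 : ∀ᶠ ρ in nhdsWithin r (Set.Ioi r),
        y * ENNReal.ofReal ((2*ρ)^n) < I r ∧ r < ρ :=
      (eventually_nhdsWithin_of_eventually_nhds hev).and
        (eventually_mem_nhdsWithin.mono fun ρ hρ => hρ)
    exact h2.exists
  have hρ0 : 0 < ρ := hr.trans hρr
  refine Filter.eventually_of_mem
    ((Metric.isOpen_ball (x := c) (ε := ρ)).mem_nhds ?_) fun x' hx' => ?_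
  · exact Metric.mem_ball.2 (lt_of_le_of_lt (Metric.mem_closedBall.1 hx) hρr)
  · have hx'' : x' ∈ Metric.closedBall c ρ := Metric.ball_subset_closedBall hx'
    have hIlt : y * volume (Metric.closedBall c ρ) < I ρ := by
      rw [vol_cb c hρ0.le]
      exact lt_of_lt_of_le hρlt (lintegral_mono_set (Metric.closedBall_subset_closedBall hρr.le))
    have : y < I ρ / volume (Metric.closedBall c ρ) :=
      (ENNReal.lt_div_iff_mul_lt (Or.inl (vol_cb_pos c hρ0).ne')
        (Or.inl (vol_cb_ne_top c hρ0.le))).2 hIlt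
    exact lt_of_lt_of_le this (le_maxOp h hρ0 hx'')


lemma measurable_maxOp (h : (Fin n → ℝ) → ℝ) : Measurable (maxOp h) :=
  (lsc_maxOp h).measurable

/-- Weak (1,1) inequality for the maximal operator. -/
lemma weak (g : (Fin n → ℝ) → ℝ) {t : ℝ≥0∞} (ht : t ≠ 0) :
    t * volume {x | t < maxOp g x} ≤
      ENNReal.ofReal (4^n) * ∫⁻ y, ENNReal.ofReal |g y| := by
  set A := ∫⁻ y, ENNReal.ofReal |g y| with hA
  have h4 : (1:ℝ) ≤ 4^n := one_le_pow₀ (by norm_num)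
  have h41 : (1:ℝ≥0∞) ≤ ENNReal.ofReal (4^n) := by
    rw [show (1:ℝ≥0∞) = ENNReal.ofReal 1 from (ENNReal.ofReal_one).symm]
    exact ENNReal.ofReal_le_ofReal h4
  -- trivial cases
  rcases eq_or_ne A ⊤ with hAtop | hAtop
  · rw [hAtop]
    rw [ENNReal.mul_top (by positivity : ENNReal.ofReal ((4:ℝ)^n) ≠ 0)]
    exact le_top
  rcases eq_or_ne t ⊤ with rfl | httop
  · have : {x | (⊤:ℝ≥0∞) < maxOp g x} = ∅ := by
      ext x; simp [not_top_lt]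
    simp [this]
  set E := {x | t < maxOp g x} with hE
  -- the dimension-zero case
  rcases Nat.eq_zero_or_pos n with hn | hn
  · subst hn
    have hmax : ∀ x, maxOp g x ≤ A := by
      intro x
      refine iSup_le fun c => iSup_le fun r => iSup_le fun hr => iSup_le fun hx => ?_
      rw [vol_cb c hr.le]
      simp only [pow_zero, ENNReal.ofReal_one, div_one]
      exact lintegral_mono' Measure.restrict_le_self le_rfl
    rcases Set.eq_empty_or_nonempty E with hEe | ⟨x, hx⟩
    · simp [hEe]
    · have htA : t ≤ A := ((hx : t < maxOp g x).trans_le (hmax x)).le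
      have hvol : volume E ≤ 1 := by
        have huniv : (Set.univ : Set (Fin 0 → ℝ)) = Metric.closedBall 0 1 := by
          ext y
          simp [Subsingleton.elim y 0]
        calc volume E ≤ volume (Set.univ : Set (Fin 0 → ℝ)) := measure_mono (subset_univ _)
        _ = 1 := by rw [huniv, vol_cb 0 (by norm_num : (0:ℝ) ≤ 1)]; norm_num
      calc t * volume E ≤ A * 1 := mul_le_mul' htA hvol
      _ ≤ ENNReal.ofReal (4^0) * A := by
        rw [mul_one]
        exact le_mul_of_one_le_left zero_le h41
  -- main case: choose witness balls
  have hwit : ∀ x : E, ∃ p : (Fin n → ℝ) × ℝ, 0 < p.2 ∧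
      (x : Fin n → ℝ) ∈ Metric.closedBall p.1 p.2 ∧
      t * volume (Metric.closedBall p.1 p.2) <
        ∫⁻ y in Metric.closedBall p.1 p.2, ENNReal.ofReal |g y| := by
    rintro ⟨x, hx⟩
    have : t < maxOp g x := hx
    simp only [maxOp, lt_iSup_iff] at this
    obtain ⟨c, r, hr, hxm, hlt⟩ := this
    exact ⟨(c, r), hr, hxm,
      (ENNReal.lt_div_iff_mul_lt (Or.inl (vol_cb_pos c hr).ne')
        (Or.inl (vol_cb_ne_top c hr.le))).1 hlt⟩
  choose p hp0 hpmem hpint using hwit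
  have hintA : ∀ x : E, (∫⁻ y in Metric.closedBall (p x).1 (p x).2, ENNReal.ofReal |g y|) ≤ A :=
    fun x => lintegral_mono' Measure.restrict_le_self le_rfl
  -- radius bound
  have hAt_top : A / t ≠ ⊤ := by
    intro hcon
    rw [ENNReal.div_eq_top] at hcon
    rcases hcon with ⟨-, h0⟩ | ⟨h1, -⟩
    exacts [ht h0, hAtop h1]
  set R : ℝ := ((A / t).toReal) ^ ((n:ℝ)⁻¹) / 2 with hR
  have hrR : ∀ x : E, (p x).2 ≤ R := by
    intro x
    have h1 : t * volume (Metric.closedBall (p x).1 (p x).2) ≤ A :=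
      ((hpint x).le.trans (hintA x))
    have h2 : volume (Metric.closedBall (p x).1 (p x).2) ≤ A / t :=
      (ENNReal.le_div_iff_mul_le (Or.inl ht) (Or.inl httop)).2
        (by rwa [mul_comm])
    rw [vol_cb _ (hp0 x).le] at h2
    have h3 : (2 * (p x).2)^n ≤ (A / t).toReal :=
      (ENNReal.ofReal_le_iff_le_toReal hAt_top).1 h2
    have h4' : (2 * (p x).2 : ℝ) ≤ ((A / t).toReal) ^ ((n:ℝ)⁻¹) := by
      have hb : (0:ℝ) ≤ 2 * (p x).2 := by linarith [(hp0 x)]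
      have := Real.rpow_le_rpow (by positivity) h3 (by positivity : (0:ℝ) ≤ (n:ℝ)⁻¹)
      rwa [← Real.rpow_natCast (2 * (p x).2) n, ← Real.rpow_mul hb,
        mul_inv_cancel₀ (by exact_mod_cast hn.ne' : (n:ℝ) ≠ 0), Real.rpow_one] at this
    linarith
  -- Vitali
  obtain ⟨u, -, hdisj, hcov⟩ :=
    Vitali.exists_disjoint_subfamily_covering_enlargement_closedBall (Set.univ : Set E)
      (fun x => (p x).1) (fun x => (p x).2) R (fun a _ => hrR a) 4 (by norm_num)
  haveI : Countable ↥u := by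
    have hcnt : Set.Countable {i : ↥u | 0 < volume (Metric.closedBall (p i.1).1 (p i.1).2)} :=
      Measure.countable_meas_pos_of_disjoint_iUnion
        (As := fun i : ↥u => Metric.closedBall (p i.1).1 (p i.1).2)
        (fun i => measurableSet_closedBall)
        (fun i j hij => hdisj i.2 j.2 (Subtype.coe_injective.ne hij))
    have : {i : ↥u | 0 < volume (Metric.closedBall (p i.1).1 (p i.1).2)} = Set.univ := by
      ext i; simp only [mem_setOf_eq, mem_univ, iff_true]
      exact vol_cb_pos _ (hp0 i.1)
    rw [this] at hcnt
    exact Set.countable_univ_iff.1 hcnt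
  have hEsub : E ⊆ ⋃ b : ↥u, Metric.closedBall (p b.1).1 (4 * (p b.1).2) := by
    intro e he
    obtain ⟨b, hb, hsub⟩ := hcov ⟨e, he⟩ (mem_univ _)
    exact Set.mem_iUnion.2 ⟨⟨b, hb⟩, hsub (hpmem ⟨e, he⟩)⟩
  have hvol4 : ∀ b : ↥u, volume (Metric.closedBall (p b.1).1 (4 * (p b.1).2)) =
      ENNReal.ofReal (4^n) * volume (Metric.closedBall (p b.1).1 (p b.1).2) := by
    intro b
    rw [vol_cb _ (by linarith [hp0 b.1] : (0:ℝ) ≤ 4 * (p b.1).2), vol_cb _ (hp0 b.1).le,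
      ← ENNReal.ofReal_mul (by positivity)]
    congr 1
    rw [← mul_pow]
    ring_nf
  calc t * volume E
      ≤ t * ∑' b : ↥u, volume (Metric.closedBall (p b.1).1 (4 * (p b.1).2)) :=
        mul_le_mul_right ((measure_mono hEsub).trans (measure_iUnion_le _)) t
    _ = ∑' b : ↥u, t * volume (Metric.closedBall (p b.1).1 (4 * (p b.1).2)) :=
        ENNReal.tsum_mul_left.symm
    _ ≤ ∑' b : ↥u, ENNReal.ofReal (4^n) *
          (∫⁻ y in Metric.closedBall (p b.1).1 (p b.1).2, ENNReal.ofReal |g y|) := by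
        refine ENNReal.tsum_le_tsum fun b => ?_
        rw [hvol4 b, ← mul_assoc, mul_comm t, mul_assoc]
        exact mul_le_mul_right (hpint b.1).le _
    _ = ENNReal.ofReal (4^n) *
          ∑' b : ↥u, (∫⁻ y in Metric.closedBall (p b.1).1 (p b.1).2, ENNReal.ofReal |g y|) :=
        ENNReal.tsum_mul_left
    _ ≤ ENNReal.ofReal (4^n) * A := by
        refine mul_le_mul_right ?_ _
        have hU := lintegral_iUnion (μ := volume)
          (s := fun i : ↥u => Metric.closedBall (p i.1).1 (p i.1).2)
          (fun i => measurableSet_closedBall)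
          (fun i j hij => hdisj i.2 j.2 (Subtype.coe_injective.ne hij))
          (fun y => ENNReal.ofReal |g y|)
        rw [← hU]
        exact lintegral_mono' Measure.restrict_le_self le_rfl


/-- Kolmogorov-type inequality. -/
lemma kolmogorov (g : (Fin n → ℝ) → ℝ) (c : Fin n → ℝ) {r μ : ℝ}
    (hr : 0 < r) (hμ0 : 0 < μ) (hμ1 : μ < 1) :
    ∫⁻ x in Metric.closedBall c r, ENNReal.ofReal ((maxOp g x).toReal ^ μ) ≤
      ENNReal.ofReal (1/(1-μ)) *
        (ENNReal.ofReal (4^n) * ∫⁻ y, ENNReal.ofReal |g y|) ^ μ *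
        (volume (Metric.closedBall c r)) ^ (1-μ) := by
  set A := ∫⁻ y, ENNReal.ofReal |g y| with hA
  set V := volume (Metric.closedBall c r) with hV
  have hV0 : V ≠ 0 := (vol_cb_pos c hr).ne'
  have hVtop : V ≠ ⊤ := vol_cb_ne_top c hr.le
  set D := ENNReal.ofReal ((4:ℝ)^n) * A with hD
  -- trivial case A = 0
  rcases eq_or_ne A 0 with hA0 | hA0
  · have hzero : ∀ x, maxOp g x = 0 := by
      intro x
      refine le_antisymm ?_ zero_le
      refine iSup_le fun c' => iSup_le fun r' => iSup_le fun hr' => iSup_le fun hx => ?_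
      have : (∫⁻ y in Metric.closedBall c' r', ENNReal.ofReal |g y|) = 0 :=
        le_antisymm (hA0 ▸ lintegral_mono' Measure.restrict_le_self le_rfl) zero_le
      simp [this]
    simp only [hzero, ENNReal.toReal_zero, Real.zero_rpow hμ0.ne', ENNReal.ofReal_zero]
    simp
  -- trivial case A = ⊤
  rcases eq_or_ne A ⊤ with hAtop | hAtop
  · have hDtop : D = ⊤ := by
      rw [hD, hAtop, ENNReal.mul_top (by positivity : ENNReal.ofReal ((4:ℝ)^n) ≠ 0)]
    have : ENNReal.ofReal (1/(1-μ)) * D ^ μ * V ^ (1-μ) = ⊤ := by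
      rw [hDtop, ENNReal.top_rpow_of_pos hμ0, ENNReal.mul_top, ENNReal.top_mul]
      · exact (ENNReal.rpow_pos (zero_lt_iff.2 hV0) hVtop).ne'
      · exact (ENNReal.ofReal_pos.2 (one_div_pos.2 (by linarith))).ne'
    rw [this]; exact le_top
  -- main case
  have hD0 : D ≠ 0 := by
    rw [hD]
    exact mul_ne_zero (ENNReal.ofReal_pos.2 (by positivity)).ne' hA0
  have hDtop : D ≠ ⊤ := by
    rw [hD]
    exact ENNReal.mul_ne_top ENNReal.ofReal_ne_top hAtop
  have hDV_top : D / V ≠ ⊤ := by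
    intro hcon
    rw [ENNReal.div_eq_top] at hcon
    rcases hcon with ⟨-, h0⟩ | ⟨h1, -⟩
    exacts [hV0 h0, hDtop h1]
  have hDV_0 : D / V ≠ 0 := by
    simp only [Ne, ENNReal.div_eq_zero_iff]
    push_neg
    exact ⟨hD0, hVtop⟩
  set d : ℝ := (D / V).toReal with hd
  have hd0 : 0 < d := ENNReal.toReal_pos hDV_0 hDV_top
  set t₀ : ℝ := d ^ μ with ht₀
  have ht₀0 : 0 < t₀ := Real.rpow_pos_of_pos hd0 μ
  -- weak-type bound on superlevel sets of f
  set f : (Fin n → ℝ) → ℝ := fun x => (maxOp g x).toReal ^ μ with hf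
  have hfm : Measurable f :=
    ((measurable_maxOp g).ennreal_toReal).pow_const μ
  have hf_nn : ∀ x, 0 ≤ f x := fun x => Real.rpow_nonneg ENNReal.toReal_nonneg μ
  -- layer cake
  have hlayer : ∫⁻ x in Metric.closedBall c r, ENNReal.ofReal (f x) =
      ∫⁻ t in Set.Ioi (0:ℝ), (volume.restrict (Metric.closedBall c r)) {a | t < f a} :=
    lintegral_eq_lintegral_meas_lt _ (Filter.Eventually.of_forall hf_nn) hfm.aemeasurable
  -- pointwise bounds on the distribution function
  have hbound1 : ∀ t : ℝ, (volume.restrict (Metric.closedBall c r)) {a | t < f a} ≤ V := by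
    intro t
    calc (volume.restrict (Metric.closedBall c r)) {a | t < f a}
        ≤ (volume.restrict (Metric.closedBall c r)) Set.univ := measure_mono (subset_univ _)
      _ = V := by rw [Measure.restrict_apply_univ]
  have hbound2 : ∀ t : ℝ, 0 < t →
      (volume.restrict (Metric.closedBall c r)) {a | t < f a} ≤
        D / ENNReal.ofReal (t ^ (1/μ)) := by
    intro t htpos
    have hsub : {a | t < f a} ⊆ {x | ENNReal.ofReal (t ^ (1/μ)) < maxOp g x} := by
      intro a ha
      have ha' : t < (maxOp g a).toReal ^ μ := ha
      have h1 : t ^ (1/μ) < ((maxOp g a).toReal ^ μ) ^ (1/μ) :=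
        Real.rpow_lt_rpow htpos.le ha' (by positivity)
      have h2 : ((maxOp g a).toReal ^ μ) ^ (1/μ) = (maxOp g a).toReal := by
        rw [← Real.rpow_mul ENNReal.toReal_nonneg, mul_one_div, div_self hμ0.ne',
          Real.rpow_one]
      have h3 : t ^ (1/μ) < (maxOp g a).toReal := h2 ▸ h1
      have hFtop : maxOp g a ≠ ⊤ := by
        intro hc
        rw [hc, ENNReal.toReal_top] at h3
        linarith [Real.rpow_pos_of_pos htpos (1/μ)]
      exact (ENNReal.ofReal_lt_iff_lt_toReal (Real.rpow_nonneg htpos.le _) hFtop).2 h3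
    calc (volume.restrict (Metric.closedBall c r)) {a | t < f a}
        ≤ volume {x | ENNReal.ofReal (t ^ (1/μ)) < maxOp g x} :=
          le_trans (measure_mono hsub) (Measure.restrict_le_self _)
      _ ≤ D / ENNReal.ofReal (t ^ (1/μ)) := by
          have hne : ENNReal.ofReal (t ^ (1/μ)) ≠ 0 :=
            (ENNReal.ofReal_pos.2 (Real.rpow_pos_of_pos htpos _)).ne'
          refine (ENNReal.le_div_iff_mul_le (Or.inl hne) (Or.inl ENNReal.ofReal_ne_top)).2 ?_
          rw [mul_comm]
          exact weak g hne
  rw [hlayer]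
  have hsplit : Set.Ioi (0:ℝ) = Set.Ioc 0 t₀ ∪ Set.Ioi t₀ :=
    (Set.Ioc_union_Ioi_eq_Ioi ht₀0.le).symm
  rw [hsplit, lintegral_union measurableSet_Ioi (Set.Ioc_disjoint_Ioi le_rfl)]
  have hpart1 : ∫⁻ t in Set.Ioc (0:ℝ) t₀,
      (volume.restrict (Metric.closedBall c r)) {a | t < f a} ≤ V * ENNReal.ofReal t₀ := by
    calc ∫⁻ t in Set.Ioc (0:ℝ) t₀, (volume.restrict (Metric.closedBall c r)) {a | t < f a}
        ≤ ∫⁻ _ in Set.Ioc (0:ℝ) t₀, V :=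
          setLIntegral_mono' measurableSet_Ioc fun t _ => hbound1 t
      _ = V * ENNReal.ofReal t₀ := by
          rw [setLIntegral_const, Real.volume_Ioc, sub_zero]
  have hpart2 : ∫⁻ t in Set.Ioi t₀,
      (volume.restrict (Metric.closedBall c r)) {a | t < f a} ≤
        D * ENNReal.ofReal (t₀ ^ (-(1/μ)+1) * (μ/(1-μ))) := by
    have hexp : -(1/μ) < -1 := by
      rw [neg_lt_neg_iff]
      exact one_lt_one_div hμ0 hμ1
    calc ∫⁻ t in Set.Ioi t₀, (volume.restrict (Metric.closedBall c r)) {a | t < f a}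
        ≤ ∫⁻ t in Set.Ioi t₀, D * ENNReal.ofReal (t ^ (-(1/μ))) := by
          refine setLIntegral_mono' measurableSet_Ioi fun t ht => ?_
          have htpos : 0 < t := ht₀0.trans ht
          refine (hbound2 t htpos).trans (le_of_eq ?_)
          rw [div_eq_mul_inv, ← ENNReal.ofReal_inv_of_pos (Real.rpow_pos_of_pos htpos _),
            ← Real.rpow_neg htpos.le]
      _ = D * ∫⁻ t in Set.Ioi t₀, ENNReal.ofReal (t ^ (-(1/μ))) :=
          lintegral_const_mul' _ _ hDtop
      _ = D * ENNReal.ofReal (∫ t in Set.Ioi t₀, t ^ (-(1/μ))) := by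
          rw [ofReal_integral_eq_lintegral_ofReal
            (integrableOn_Ioi_rpow_of_lt hexp ht₀0)
            ((ae_restrict_iff' measurableSet_Ioi).2 (Filter.Eventually.of_forall
              fun t ht => Real.rpow_nonneg (le_of_lt (ht₀0.trans ht)) _))]
      _ = D * ENNReal.ofReal (t₀ ^ (-(1/μ)+1) * (μ/(1-μ))) := by
          rw [integral_Ioi_rpow_of_lt hexp ht₀0]
          congr 2
          have ha1 : -(1/μ)+1 = -((1-μ)/μ) := by field_simp; ring
          rw [ha1, div_neg, neg_div, neg_neg, div_div_eq_mul_div, mul_div_assoc]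
  -- the two computations
  have hDVfacts : D ^ μ ≠ 0 ∧ D ^ μ ≠ ⊤ ∧ V ^ (1-μ) ≠ 0 ∧ V ^ (1-μ) ≠ ⊤ := by
    refine ⟨?_, ?_, ?_, ?_⟩
    · exact (ENNReal.rpow_pos (zero_lt_iff.2 hD0) hDtop).ne'
    · exact ENNReal.rpow_ne_top_of_nonneg hμ0.le hDtop
    · exact (ENNReal.rpow_pos (zero_lt_iff.2 hV0) hVtop).ne'
    · exact ENNReal.rpow_ne_top_of_nonneg (by linarith) hVtop
  have hofd : ENNReal.ofReal d = D / V := ENNReal.ofReal_toReal hDV_top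
  have hVdiv : V / V ^ μ = V ^ (1-μ) := by
    have h := ENNReal.rpow_sub (x := V) 1 μ hV0 hVtop
    rw [ENNReal.rpow_one] at h
    exact h.symm
  have claimA : V * ENNReal.ofReal t₀ = D ^ μ * V ^ (1-μ) := by
    calc V * ENNReal.ofReal t₀ = V * (D ^ μ / V ^ μ) := by
          rw [ht₀, ← ENNReal.ofReal_rpow_of_pos hd0, hofd,
            ENNReal.div_rpow_of_nonneg _ _ hμ0.le]
      _ = D ^ μ * (V / V ^ μ) := by
          rw [div_eq_mul_inv, div_eq_mul_inv, mul_left_comm]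
      _ = D ^ μ * V ^ (1-μ) := by rw [hVdiv]
  have hμ1' : (0:ℝ) ≤ μ/(1-μ) := div_nonneg hμ0.le (by linarith)
  have hDdiv : D / D ^ (1-μ) = D ^ μ := by
    have h := ENNReal.rpow_sub (x := D) 1 (1-μ) hD0 hDtop
    rw [ENNReal.rpow_one] at h
    rw [← h]
    congr 1
    ring
  have claimB : D * ENNReal.ofReal (t₀ ^ (-(1/μ)+1) * (μ/(1-μ))) =
      D ^ μ * V ^ (1-μ) * ENNReal.ofReal (μ/(1-μ)) := by
    have hofr : ENNReal.ofReal (t₀ ^ (-(1/μ)+1)) = (D/V) ^ (μ-1) := by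
      rw [ht₀, ← Real.rpow_mul hd0.le]
      have hme : μ * (-(1/μ)+1) = μ - 1 := by field_simp; ring
      rw [hme, ← ENNReal.ofReal_rpow_of_pos hd0, hofd]
    have h1 : (D/V) ^ (μ-1) = V ^ (1-μ) / D ^ (1-μ) := by
      rw [show μ-1 = -(1-μ) by ring, ENNReal.rpow_neg,
        ENNReal.div_rpow_of_nonneg _ _ (by linarith : (0:ℝ) ≤ 1-μ),
        ENNReal.inv_div (Or.inl hDVfacts.2.2.2) (Or.inl hDVfacts.2.2.1)]
    calc D * ENNReal.ofReal (t₀ ^ (-(1/μ)+1) * (μ/(1-μ)))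
        = D * (ENNReal.ofReal (t₀ ^ (-(1/μ)+1)) * ENNReal.ofReal (μ/(1-μ))) := by
          rw [ENNReal.ofReal_mul (Real.rpow_nonneg ht₀0.le _)]
      _ = D * (D/V) ^ (μ-1) * ENNReal.ofReal (μ/(1-μ)) := by
          rw [hofr, ← mul_assoc]
      _ = D ^ μ * V ^ (1-μ) * ENNReal.ofReal (μ/(1-μ)) := by
          congr 1
          rw [h1, div_eq_mul_inv, mul_left_comm, ← div_eq_mul_inv, hDdiv, mul_comm]
  have hone : (1:ℝ≥0∞) + ENNReal.ofReal (μ/(1-μ)) = ENNReal.ofReal (1/(1-μ)) := by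
    rw [← ENNReal.ofReal_one, ← ENNReal.ofReal_add zero_le_one hμ1']
    congr 1
    have h1μ : (1:ℝ) - μ ≠ 0 := by linarith
    field_simp
    ring
  calc (∫⁻ t in Set.Ioc (0:ℝ) t₀, (volume.restrict (Metric.closedBall c r)) {a | t < f a}) +
        ∫⁻ t in Set.Ioi t₀, (volume.restrict (Metric.closedBall c r)) {a | t < f a}
      ≤ V * ENNReal.ofReal t₀ + D * ENNReal.ofReal (t₀ ^ (-(1/μ)+1) * (μ/(1-μ))) :=
        add_le_add hpart1 hpart2
    _ = D ^ μ * V ^ (1-μ) * (1 + ENNReal.ofReal (μ/(1-μ))) := by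
        rw [claimA, claimB, mul_add, mul_one]
    _ = ENNReal.ofReal (1/(1-μ)) * D ^ μ * V ^ (1-μ) := by
        rw [hone]
        ring

/-- Far-part bound: the maximal function of `h` restricted outside `3B` is controlled,
on `B`, by `3^n` times the maximal function at any point of `B`. -/
lemma far (h : (Fin n → ℝ) → ℝ) {c : Fin n → ℝ} {r : ℝ} (hr : 0 < r)
    {x z : Fin n → ℝ} (hx : x ∈ Metric.closedBall c r) (hz : z ∈ Metric.closedBall c r) :
    maxOp ((Metric.closedBall c (3*r))ᶜ.indicator h) x ≤
      ENNReal.ofReal (3^n) * maxOp h z := by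
  set S := (Metric.closedBall c (3*r))ᶜ with hS
  refine iSup_le fun c' => iSup_le fun r' => iSup_le fun hr' => iSup_le fun hx' => ?_
  by_cases hsub : Metric.closedBall c' r' ⊆ Metric.closedBall c (3*r)
  · have hzero : (∫⁻ y in Metric.closedBall c' r', ENNReal.ofReal |S.indicator h y|) = 0 := by
      have : ∀ y ∈ Metric.closedBall c' r', ENNReal.ofReal |S.indicator h y| = 0 := by
        intro y hy
        rw [Set.indicator_of_notMem (by simpa [hS] using hsub hy)]
        simp
      refine le_antisymm ?_ zero_le
      calc (∫⁻ y in Metric.closedBall c' r', ENNReal.ofReal |S.indicator h y|)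
          ≤ ∫⁻ _ in Metric.closedBall c' r', 0 :=
            setLIntegral_mono' measurableSet_closedBall fun y hy => le_of_eq (this y hy)
        _ = 0 := by simp
    rw [hzero, ENNReal.zero_div]
    exact zero_le
  · obtain ⟨w, hw1, hw2⟩ := Set.not_subset.1 hsub
    have hd1 : 3*r < dist w c := lt_of_not_ge (fun hcon => hw2 (Metric.mem_closedBall.2 hcon))
    have hdxw : dist w c' ≤ r' := Metric.mem_closedBall.1 hw1
    have hdxc' : dist x c' ≤ r' := Metric.mem_closedBall.1 hx'
    have hdxc : dist x c ≤ r := Metric.mem_closedBall.1 hx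
    have hrr' : r < r' := by
      have : dist w c ≤ dist w c' + dist c' x + dist x c := dist_triangle4 w c' x c
      rw [dist_comm c' x] at this
      nlinarith [dist_nonneg (x := w) (y := c')]
    have hzin : z ∈ Metric.closedBall c' (3*r') := by
      have h1 : dist z c ≤ r := Metric.mem_closedBall.1 hz
      have h2 : dist z c' ≤ dist z c + dist c x + dist x c' := dist_triangle4 z c x c'
      rw [dist_comm c x] at h2
      refine Metric.mem_closedBall.2 ?_
      linarith
    have h3r' : (0:ℝ) < 3*r' := by linarith
    have hvol3 : volume (Metric.closedBall c' (3*r')) =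
        ENNReal.ofReal (3^n) * volume (Metric.closedBall c' r') := by
      rw [vol_cb _ h3r'.le, vol_cb _ (hr.trans hrr').le, ← ENNReal.ofReal_mul (by positivity)]
      congr 1
      rw [← mul_pow]
      ring_nf
    have hnum : (∫⁻ y in Metric.closedBall c' r', ENNReal.ofReal |S.indicator h y|) ≤
        ENNReal.ofReal (3^n) * maxOp h z * volume (Metric.closedBall c' r') := by
      calc (∫⁻ y in Metric.closedBall c' r', ENNReal.ofReal |S.indicator h y|)
          ≤ ∫⁻ y in Metric.closedBall c' r', ENNReal.ofReal |h y| :=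
            lintegral_mono fun y => ENNReal.ofReal_le_ofReal (abs_indicator_le h S y)
        _ ≤ ∫⁻ y in Metric.closedBall c' (3*r'), ENNReal.ofReal |h y| :=
            lintegral_mono_set (Metric.closedBall_subset_closedBall (by linarith))
        _ ≤ maxOp h z * volume (Metric.closedBall c' (3*r')) := by
            refine (ENNReal.div_le_iff_le_mul (Or.inl (vol_cb_pos c' h3r').ne')
              (Or.inl (vol_cb_ne_top c' h3r'.le))).1 (le_maxOp h h3r' hzin)
        _ = ENNReal.ofReal (3^n) * maxOp h z * volume (Metric.closedBall c' r') := by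
            rw [hvol3]
            ring
    exact (ENNReal.div_le_iff_le_mul (Or.inl (vol_cb_pos c' (hr.trans hrr')).ne')
      (Or.inl (vol_cb_ne_top c' (hr.trans hrr').le))).2 hnum

lemma rpow_eq_ofReal {a : ℝ≥0∞} (ha : a ≠ ⊤) {p : ℝ} (hp : 0 ≤ p) :
    a ^ p = ENNReal.ofReal (a.toReal ^ p) := by
  conv_lhs => rw [← ENNReal.ofReal_toReal ha]
  rw [ENNReal.ofReal_rpow_of_nonneg ENNReal.toReal_nonneg hp]

/-- The per-ball A₁ estimate. -/
lemma ball_bound (h : (Fin n → ℝ) → ℝ) (hh : MeasureTheory.LocallyIntegrable h volume)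
    (hfin : ∀ᵐ x, maxOp h x < ⊤) {μ : ℝ} (hμ0 : 0 < μ) (hμ1 : μ < 1)
    (c : Fin n → ℝ) {r : ℝ} (hr : 0 < r) :
    ∫⁻ x in Metric.closedBall c r, ENNReal.ofReal ((maxOp h x).toReal ^ μ) ≤
      ENNReal.ofReal ((2*12^n)/(1-μ)) *
        essInf (fun y => ENNReal.ofReal ((maxOp h y).toReal ^ μ))
          (volume.restrict (Metric.closedBall c r)) *
        volume (Metric.closedBall c r) := by
  have h1μ : (0:ℝ) < 1 - μ := by linarith
  set u : (Fin n → ℝ) → ℝ := fun x => (maxOp h x).toReal ^ μ with hu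
  set B := Metric.closedBall c r with hB
  set V := volume B with hV
  have hV0 : V ≠ 0 := (vol_cb_pos c hr).ne'
  have hVtop : V ≠ ⊤ := vol_cb_ne_top c hr.le
  set m := essInf (fun y => ENNReal.ofReal (u y)) (volume.restrict B) with hm
  set K := ENNReal.ofReal ((2*12^n)/(1-μ)) with hK
  have hK0 : K ≠ 0 := (ENNReal.ofReal_pos.2 (by positivity)).ne'
  have hKtop : K ≠ ⊤ := ENNReal.ofReal_ne_top
  rcases eq_or_ne m ⊤ with hmtop | hmtop
  · rw [hmtop, ENNReal.mul_top hK0, ENNReal.top_mul hV0]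
    exact le_top
  suffices hb : ∀ b, m < b → (∫⁻ x in B, ENNReal.ofReal (u x)) ≤ K * V * b by
    have hKV0 : K * V ≠ 0 := mul_ne_zero hK0 hV0
    have hKVtop : K * V ≠ ⊤ := ENNReal.mul_ne_top hKtop hVtop
    have h1 : ∀ b, m < b → (∫⁻ x in B, ENNReal.ofReal (u x)) / (K * V) ≤ b := by
      intro b hb'
      refine (ENNReal.div_le_iff_le_mul (Or.inl hKV0) (Or.inl hKVtop)).2 ?_
      rw [mul_comm b (K*V)]
      exact hb b hb'
    have h2 : (∫⁻ x in B, ENNReal.ofReal (u x)) / (K * V) ≤ m := by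
      by_contra hcon
      push_neg at hcon
      obtain ⟨b, hb1, hb2⟩ := exists_between hcon
      exact absurd (h1 b hb1) (not_le.2 hb2)
    calc ∫⁻ x in B, ENNReal.ofReal (u x)
        ≤ m * (K * V) := (ENNReal.div_le_iff_le_mul (Or.inl hKV0) (Or.inl hKVtop)).1 h2
      _ = K * m * V := by ring
  intro b hb
  -- find a good point z
  have humeas : Measurable fun y => ENNReal.ofReal (u y) :=
    ((measurable_maxOp h).ennreal_toReal.pow_const μ).ennreal_ofReal
  have hres0 : volume.restrict B ≠ 0 := by
    intro hz
    have := congrArg (fun ν : Measure (Fin n → ℝ) => ν Set.univ) hz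
    simp only [Measure.restrict_apply_univ, Measure.coe_zero, Pi.zero_apply] at this
    exact hV0 this
  have hpos : volume ({y | ENNReal.ofReal (u y) < b} ∩ B) ≠ 0 := by
    intro h0
    have hzero : (volume.restrict B) {y | ENNReal.ofReal (u y) < b} = 0 := by
      rw [Measure.restrict_apply (measurableSet_lt humeas measurable_const)]
      exact h0
    have hae : ∀ᵐ y ∂(volume.restrict B), b ≤ ENNReal.ofReal (u y) := by
      rw [ae_iff]
      simpa only [not_le] using hzero
    have : b ≤ m := by
      calc b = essInf (fun _ => b) (volume.restrict B) := (essInf_const _ hres0).symm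
        _ ≤ m := essInf_mono_ae hae
    exact absurd this (not_le.2 hb)
  have hN : volume {x | ¬ maxOp h x < ⊤} = 0 := ae_iff.1 hfin
  obtain ⟨z, ⟨hzb, hzB⟩, hzfin'⟩ :=
    nonempty_of_measure_ne_zero (show volume (({y | ENNReal.ofReal (u y) < b} ∩ B) \
      {x | ¬ maxOp h x < ⊤}) ≠ 0 by rwa [measure_diff_null hN])
  have hzfin : maxOp h z < ⊤ := not_not.1 hzfin'
  have hFz : maxOp h z ≠ ⊤ := hzfin.ne
  -- split h
  set S := Metric.closedBall c (3*r) with hSdef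
  set g1 := S.indicator h with hg1
  set g2 := Sᶜ.indicator h with hg2
  have h3r : (0:ℝ) < 3*r := by linarith
  have hzS : z ∈ S := Metric.closedBall_subset_closedBall (by linarith) hzB
  -- the L¹ norm of the local part
  have hA1 : (∫⁻ y, ENNReal.ofReal |g1 y|) = ∫⁻ y in S, ENNReal.ofReal |h y| := by
    have hpt : ∀ y, ENNReal.ofReal |g1 y| =
        S.indicator (fun y => ENNReal.ofReal |h y|) y := by
      intro y
      by_cases hy : y ∈ S
      · rw [hg1, Set.indicator_of_mem hy, Set.indicator_of_mem hy]
      · rw [hg1, Set.indicator_of_notMem hy, Set.indicator_of_notMem hy]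
        simp
    rw [lintegral_congr hpt, lintegral_indicator measurableSet_closedBall]
  have hvolS : volume S = ENNReal.ofReal (3^n) * V := by
    rw [hSdef, vol_cb _ h3r.le, hV, hB, vol_cb _ hr.le, ← ENNReal.ofReal_mul (by positivity)]
    congr 1
    rw [← mul_pow]
    ring_nf
  have hA1le : (∫⁻ y, ENNReal.ofReal |g1 y|) ≤ ENNReal.ofReal (3^n) * V * maxOp h z := by
    rw [hA1]
    have hle := le_maxOp h h3r hzS
    have h2' : (∫⁻ y in S, ENNReal.ofReal |h y|) ≤ maxOp h z * volume S :=
      (ENNReal.div_le_iff_le_mul (Or.inl (vol_cb_pos c h3r).ne')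
        (Or.inl (vol_cb_ne_top c h3r.le))).1 hle
    calc (∫⁻ y in S, ENNReal.ofReal |h y|) ≤ maxOp h z * volume S := h2'
      _ = ENNReal.ofReal (3^n) * V * maxOp h z := by rw [hvolS]; ring
  -- Kolmogorov bound for the local part
  have hVμ : V^μ * V^(1-μ) = V := by
    rw [← ENNReal.rpow_add μ (1-μ) hV0 hVtop]
    norm_num
  have hI1 : (∫⁻ x in B, ENNReal.ofReal ((maxOp g1 x).toReal ^ μ)) ≤
      ENNReal.ofReal (12^n/(1-μ)) * b * V := by
    have hk := kolmogorov g1 c hr hμ0 hμ1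
    have hstep : (ENNReal.ofReal (4^n) * ∫⁻ y, ENNReal.ofReal |g1 y|) ^ μ ≤
        ENNReal.ofReal (12^n) * V^μ * b := by
      have hin : ENNReal.ofReal (4^n) * (∫⁻ y, ENNReal.ofReal |g1 y|) ≤
          ENNReal.ofReal (12^n) * (V * maxOp h z) := by
        calc ENNReal.ofReal (4^n) * (∫⁻ y, ENNReal.ofReal |g1 y|)
            ≤ ENNReal.ofReal (4^n) * (ENNReal.ofReal (3^n) * V * maxOp h z) :=
              mul_le_mul_right hA1le _
          _ = ENNReal.ofReal (12^n) * (V * maxOp h z) := by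
              have h43 : ENNReal.ofReal ((4:ℝ)^n) * ENNReal.ofReal ((3:ℝ)^n) =
                  ENNReal.ofReal ((12:ℝ)^n) := by
                rw [← ENNReal.ofReal_mul (by positivity), ← mul_pow]
                norm_num
              calc ENNReal.ofReal ((4:ℝ)^n) * (ENNReal.ofReal ((3:ℝ)^n) * V * maxOp h z)
                  = (ENNReal.ofReal ((4:ℝ)^n) * ENNReal.ofReal ((3:ℝ)^n)) *
                    (V * maxOp h z) := by ring
                _ = ENNReal.ofReal (12^n) * (V * maxOp h z) := by rw [h43]
      calc (ENNReal.ofReal (4^n) * ∫⁻ y, ENNReal.ofReal |g1 y|) ^ μ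
          ≤ (ENNReal.ofReal (12^n) * (V * maxOp h z)) ^ μ :=
            ENNReal.rpow_le_rpow hin hμ0.le
        _ = ENNReal.ofReal (12^n) ^ μ * (V^μ * (maxOp h z)^μ) := by
            rw [ENNReal.mul_rpow_of_nonneg _ _ hμ0.le, ENNReal.mul_rpow_of_nonneg _ _ hμ0.le]
        _ ≤ ENNReal.ofReal (12^n) * (V^μ * b) := by
            refine mul_le_mul' ?_ (mul_le_mul_right ?_ _)
            · rw [ENNReal.ofReal_rpow_of_pos (by positivity)]
              refine ENNReal.ofReal_le_ofReal ?_
              calc ((12:ℝ)^n) ^ μ ≤ ((12:ℝ)^n) ^ (1:ℝ) :=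
                Real.rpow_le_rpow_of_exponent_le (one_le_pow₀ (by norm_num)) hμ1.le
              _ = 12^n := Real.rpow_one _
            · rw [rpow_eq_ofReal hFz hμ0.le]
              exact hzb.le
        _ = ENNReal.ofReal (12^n) * V^μ * b := by ring
    calc (∫⁻ x in B, ENNReal.ofReal ((maxOp g1 x).toReal ^ μ))
        ≤ ENNReal.ofReal (1/(1-μ)) * (ENNReal.ofReal (12^n) * V^μ * b) * V^(1-μ) := by
          refine le_trans hk ?_
          exact mul_le_mul_left (mul_le_mul_right hstep _) _
      _ = ENNReal.ofReal (1/(1-μ)) * ENNReal.ofReal (12^n) * b * (V^μ * V^(1-μ)) := by ring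
      _ = ENNReal.ofReal (12^n/(1-μ)) * b * V := by
          rw [hVμ, ← ENNReal.ofReal_mul (by positivity)]
          congr 3
          field_simp
  -- far part
  have hI2 : (∫⁻ x in B, ENNReal.ofReal ((maxOp g2 x).toReal ^ μ)) ≤
      ENNReal.ofReal (3^n) * b * V := by
    have hptw : ∀ x ∈ B, ENNReal.ofReal ((maxOp g2 x).toReal ^ μ) ≤
        ENNReal.ofReal (3^n) * ENNReal.ofReal (u z) := by
      intro x hxB
      have hle := far h hr hxB hzB
      have hRtop : ENNReal.ofReal (3^n) * maxOp h z ≠ ⊤ :=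
        ENNReal.mul_ne_top ENNReal.ofReal_ne_top hFz
      have htr : (maxOp g2 x).toReal ≤ 3^n * (maxOp h z).toReal := by
        have := ENNReal.toReal_mono hRtop hle
        rwa [ENNReal.toReal_mul, ENNReal.toReal_ofReal (by positivity)] at this
      have hrp : (maxOp g2 x).toReal ^ μ ≤ (3^n) * ((maxOp h z).toReal ^ μ) := by
        calc (maxOp g2 x).toReal ^ μ ≤ (3^n * (maxOp h z).toReal) ^ μ :=
            Real.rpow_le_rpow ENNReal.toReal_nonneg htr hμ0.le
          _ = ((3:ℝ)^n)^μ * (maxOp h z).toReal ^ μ :=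
            Real.mul_rpow (by positivity) ENNReal.toReal_nonneg
          _ ≤ (3:ℝ)^n * (maxOp h z).toReal ^ μ := by
            refine mul_le_mul_of_nonneg_right ?_ (Real.rpow_nonneg ENNReal.toReal_nonneg _)
            calc ((3:ℝ)^n) ^ μ ≤ ((3:ℝ)^n) ^ (1:ℝ) :=
                Real.rpow_le_rpow_of_exponent_le (one_le_pow₀ (by norm_num)) hμ1.le
              _ = 3^n := Real.rpow_one _
      calc ENNReal.ofReal ((maxOp g2 x).toReal ^ μ)
          ≤ ENNReal.ofReal (3^n * u z) := ENNReal.ofReal_le_ofReal hrp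
        _ = ENNReal.ofReal (3^n) * ENNReal.ofReal (u z) :=
          ENNReal.ofReal_mul (by positivity)
    calc (∫⁻ x in B, ENNReal.ofReal ((maxOp g2 x).toReal ^ μ))
        ≤ ∫⁻ _ in B, ENNReal.ofReal (3^n) * ENNReal.ofReal (u z) :=
          setLIntegral_mono' measurableSet_closedBall hptw
      _ = ENNReal.ofReal (3^n) * ENNReal.ofReal (u z) * V := by
          rw [setLIntegral_const]
      _ ≤ ENNReal.ofReal (3^n) * b * V :=
          mul_le_mul_left (mul_le_mul_right hzb.le _) V
  -- pointwise splitting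
  have hsplitae : ∀ᵐ x, ENNReal.ofReal (u x) ≤
      ENNReal.ofReal ((maxOp g1 x).toReal^μ) + ENNReal.ofReal ((maxOp g2 x).toReal^μ) := by
    filter_upwards [hfin] with x hx
    have hle12 : maxOp h x ≤ maxOp g1 x + maxOp g2 x :=
      maxOp_split h measurableSet_closedBall hh.aestronglyMeasurable.aemeasurable x
    have h1top : maxOp g1 x ≠ ⊤ :=
      ((maxOp_mono (fun y => abs_indicator_le h S y) x).trans_lt hx).ne
    have h2top : maxOp g2 x ≠ ⊤ :=
      ((maxOp_mono (fun y => abs_indicator_le h Sᶜ y) x).trans_lt hx).ne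
    calc ENNReal.ofReal (u x) = (maxOp h x) ^ μ := (rpow_eq_ofReal hx.ne hμ0.le).symm
      _ ≤ (maxOp g1 x + maxOp g2 x) ^ μ := ENNReal.rpow_le_rpow hle12 hμ0.le
      _ ≤ (maxOp g1 x)^μ + (maxOp g2 x)^μ :=
        ENNReal.rpow_add_le_add_rpow _ _ hμ0.le hμ1.le
      _ = ENNReal.ofReal ((maxOp g1 x).toReal^μ) + ENNReal.ofReal ((maxOp g2 x).toReal^μ) := by
        rw [rpow_eq_ofReal h1top hμ0.le, rpow_eq_ofReal h2top hμ0.le]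
  have hcomb : (∫⁻ x in B, ENNReal.ofReal (u x)) ≤
      (∫⁻ x in B, ENNReal.ofReal ((maxOp g1 x).toReal^μ)) +
      (∫⁻ x in B, ENNReal.ofReal ((maxOp g2 x).toReal^μ)) := by
    calc (∫⁻ x in B, ENNReal.ofReal (u x))
        ≤ ∫⁻ x in B, (ENNReal.ofReal ((maxOp g1 x).toReal^μ) +
            ENNReal.ofReal ((maxOp g2 x).toReal^μ)) :=
          lintegral_mono_ae (ae_restrict_of_ae hsplitae)
      _ = _ := lintegral_add_left
          (((measurable_maxOp g1).ennreal_toReal.pow_const μ).ennreal_ofReal) _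
  -- conclusion
  have hconst : ENNReal.ofReal (12^n/(1-μ)) + ENNReal.ofReal (3^n) ≤ K := by
    rw [hK, ← ENNReal.ofReal_add (by positivity) (by positivity)]
    refine ENNReal.ofReal_le_ofReal ?_
    have a1 : (3:ℝ)^n ≤ 12^n := pow_le_pow_left₀ (by norm_num) (by norm_num) n
    have a2 : (12:ℝ)^n ≤ 12^n/(1-μ) := by
      rw [le_div_iff₀ h1μ]
      nlinarith [pow_pos (show (0:ℝ) < 12 by norm_num) n]
    have a3 : 2*(12:ℝ)^n/(1-μ) = 12^n/(1-μ) + 12^n/(1-μ) := by ring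
    linarith
  calc (∫⁻ x in B, ENNReal.ofReal (u x))
      ≤ (ENNReal.ofReal (12^n/(1-μ)) * b * V) + (ENNReal.ofReal (3^n) * b * V) :=
        hcomb.trans (add_le_add hI1 hI2)
    _ = (ENNReal.ofReal (12^n/(1-μ)) + ENNReal.ofReal (3^n)) * b * V := by ring
    _ ≤ K * b * V := by
        exact mul_le_mul_left (mul_le_mul_left hconst _) _
    _ = K * V * b := by ring

end CR

open CR in
/-- Coifman–Rochberg: for each dimension `n` there is `C_n > 0` such that whenever
`h ∈ L¹_loc(ℝⁿ)` with `Mh < ∞` a.e. and `0 < μ < 1`, the weight `(Mh)^μ` is in `A₁`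
with constant at most `C_n/(1 − μ)`. -/
theorem coifman_rochberg (n : ℕ) :
    ∃ C : ℝ, 0 < C ∧
      ∀ (h : (Fin n → ℝ) → ℝ), MeasureTheory.LocallyIntegrable h volume →
        (∀ᵐ x, maxOp h x < ⊤) →
        ∀ μ : ℝ, 0 < μ → μ < 1 →
          IsA1 (fun x => (maxOp h x).toReal ^ μ) (C / (1 - μ)) := by
  refine ⟨2 * 12^n, by positivity, ?_⟩
  intro h hh hfin μ hμ0 hμ1
  have humeas : Measurable fun x => (maxOp h x).toReal ^ μ :=
    (measurable_maxOp h).ennreal_toReal.pow_const μ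
  have hball := fun (c : Fin n → ℝ) {r : ℝ} (hr : 0 < r) =>
    ball_bound h hh hfin hμ0 hμ1 c hr
  refine ⟨fun x => Real.rpow_nonneg ENNReal.toReal_nonneg μ, ?_, ?_⟩
  · -- local integrability
    intro x
    refine ⟨Metric.closedBall x 1, Metric.closedBall_mem_nhds x one_pos, ?_⟩
    refine ⟨humeas.aestronglyMeasurable.restrict, ?_⟩
    rw [hasFiniteIntegral_iff_norm]
    have hnorm : ∀ y : Fin n → ℝ,
        ENNReal.ofReal ‖(maxOp h y).toReal ^ μ‖ =
          ENNReal.ofReal ((maxOp h y).toReal ^ μ) := by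
      intro y
      rw [Real.norm_of_nonneg (Real.rpow_nonneg ENNReal.toReal_nonneg μ)]
    -- essInf is finite
    have hres0 : volume.restrict (Metric.closedBall x 1) ≠ 0 := by
      intro hz
      have := congrArg (fun ν : Measure (Fin n → ℝ) => ν Set.univ) hz
      simp only [Measure.restrict_apply_univ, Measure.coe_zero, Pi.zero_apply] at this
      exact (vol_cb_pos x one_pos).ne' this
    haveI : (ae (volume.restrict (Metric.closedBall x 1))).NeBot := ae_neBot.2 hres0
    obtain ⟨y, hy⟩ := (ae_essInf_le
      (f := fun y => ENNReal.ofReal ((maxOp h y).toReal ^ μ))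
      (μ := volume.restrict (Metric.closedBall x 1))).exists
    have hmfin : essInf (fun y => ENNReal.ofReal ((maxOp h y).toReal ^ μ))
        (volume.restrict (Metric.closedBall x 1)) ≠ ⊤ :=
      (hy.trans_lt ENNReal.ofReal_lt_top).ne
    calc ∫⁻ y in Metric.closedBall x 1, ENNReal.ofReal ‖(maxOp h y).toReal ^ μ‖
        = ∫⁻ y in Metric.closedBall x 1, ENNReal.ofReal ((maxOp h y).toReal ^ μ) := by
          simp_rw [hnorm]
      _ ≤ ENNReal.ofReal ((2*12^n)/(1-μ)) *
            essInf (fun y => ENNReal.ofReal ((maxOp h y).toReal ^ μ))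
              (volume.restrict (Metric.closedBall x 1)) *
            volume (Metric.closedBall x 1) := hball x one_pos
      _ < ⊤ := by
          refine ENNReal.mul_lt_top (ENNReal.mul_lt_top ENNReal.ofReal_lt_top ?_) ?_
          · exact lt_top_iff_ne_top.2 hmfin
          · exact lt_top_iff_ne_top.2 (vol_cb_ne_top x zero_le_one)
  · intro c r hr
    simp only [wInt]
    exact hball c hr
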